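/- For every ε ≤ 1/12, there exists a family of n-node undirected positively weighted graphs G such that every positive reweighting H of G in which every shortest path of H is a (1+ε)-approximate shortest path of G has aspect ratio at least 2^{cn} for an absolute constant c > 0. -/

import Mathlib

/-- The weight of a path (list of vertices): sum of weights of consecutive edges. -/
def pathWeight {V : Type} (w : V → V → ℝ) : List V → ℝ
  | [] => 0
  | [_] => 0
  | a :: b :: rest => w a b + pathWeight w (b :: rest)

/-- A nonempty list of vertices is a path if consecutive vertices are joined by edges. -/
def IsPath {V : Type} (E : V → V → Prop) : List V → Prop
  | [] => False
  | [_] => True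
  | a :: b :: rest => E a b ∧ IsPath E (b :: rest)

/-- `p` is a shortest path: it is a path, and no path with the same endpoints is shorter. -/
def IsShortestPath {V : Type} (E : V → V → Prop) (w : V → V → ℝ) (p : List V) : Prop :=
  IsPath E p ∧ ∀ q : List V, IsPath E q → q.head? = p.head? → q.getLast? = p.getLast? →
    pathWeight w p ≤ pathWeight w q

/-- `p` is an α-approximate shortest path: it is a path whose weight is at
most α times the weight of every path with the same endpoints. -/
def IsApproxSP {V : Type} (E : V → V → Prop) (w : V → V → ℝ) (α : ℝ) (p : List V) : Prop :=
  IsPath E p ∧ ∀ q : List V, IsPath E q → q.head? = p.head? → q.getLast? = p.getLast? →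
    pathWeight w p ≤ α * pathWeight w q

namespace SPAux

variable {V : Type} {E : V → V → Prop} {w : V → V → ℝ}

lemma pathWeight_cons_cons {a b : V} {l : List V} :
    pathWeight w (a :: b :: l) = w a b + pathWeight w (b :: l) := rfl

lemma pathWeight_nonneg (hw : ∀ u v, E u v → 0 ≤ w u v) :
    ∀ l, IsPath E l → 0 ≤ pathWeight w l
  | [], _ => le_of_eq rfl
  | [_], _ => le_of_eq rfl
  | a :: b :: l, h =>
    add_nonneg (hw _ _ h.1) (pathWeight_nonneg hw (b :: l) h.2)

lemma pathWeight_ge_potential (d : V → ℝ) (hd : ∀ u v, E u v → d u ≤ w u v + d v) :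
    ∀ (l : List V) (a b : V), IsPath E l → l.head? = some a → l.getLast? = some b →
      d a - d b ≤ pathWeight w l
  | [], a, b, h, _, _ => absurd h (by simp [IsPath])
  | [x], a, b, _, ha, hb => by
    simp at ha hb
    subst ha; subst hb
    simp [pathWeight]
  | x :: y :: l, a, b, h, ha, hb => by
    simp at ha
    subst ha
    have hb2 : (y :: l).getLast? = some b := by
      rw [List.getLast?_cons_cons] at hb; exact hb
    have ih := pathWeight_ge_potential d hd (y :: l) y b h.2 (by simp) hb2
    have := hd _ _ h.1
    rw [pathWeight_cons_cons]
    linarith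

lemma isPath_ne_nil {l : List V} (h : IsPath E l) : l ≠ [] := by
  cases l with
  | nil => exact absurd h (by simp [IsPath])
  | cons a l => simp

lemma isPath_tail {a : V} {l : List V} (h : IsPath E (a :: l)) (hl : l ≠ []) :
    IsPath E l := by
  cases l with
  | nil => simp at hl
  | cons b l => exact h.2

lemma isPath_suffix : ∀ (l r : List V), IsPath E (l ++ r) → r ≠ [] → IsPath E r
  | [], r, h, _ => h
  | a :: l, r, h, hr => by
    have : l ++ r ≠ [] := by simp [hr]
    exact isPath_suffix l r (isPath_tail (by simpa using h) this) hr

lemma pathWeight_suffix_le (hw : ∀ u v, E u v → 0 ≤ w u v) :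
    ∀ (l r : List V), IsPath E (l ++ r) → r ≠ [] → pathWeight w r ≤ pathWeight w (l ++ r)
  | [], r, _, _ => le_refl _
  | a :: l, r, h, hr => by
    have hne : l ++ r ≠ [] := by simp [hr]
    have htail : IsPath E (l ++ r) := isPath_tail (by simpa using h) hne
    have ih := pathWeight_suffix_le hw l r htail hr
    cases hlr : l ++ r with
    | nil => exact absurd hlr hne
    | cons b m =>
      have h' : IsPath E (a :: b :: m) := by rw [← hlr]; simpa using h
      have heq : pathWeight w ((a :: l) ++ r) = w a b + pathWeight w (b :: m) := by
        show pathWeight w (a :: (l ++ r)) = _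
        rw [hlr]; rfl
      have hwab := hw _ _ h'.1
      rw [heq]
      rw [hlr] at ih
      linarith

lemma getLast?_cons_of_ne_nil {a : V} {l : List V} (hl : l ≠ []) :
    (a :: l).getLast? = l.getLast? := by
  have : a :: l = [a] ++ l := rfl
  rw [this, List.getLast?_append_of_ne_nil _ hl]

lemma exists_nodup_path_aux (hw : ∀ u v, E u v → 0 ≤ w u v) :
    ∀ (N : ℕ) (q : List V), q.length ≤ N → IsPath E q →
      ∃ q', IsPath E q' ∧ q'.head? = q.head? ∧ q'.getLast? = q.getLast? ∧ q'.Nodup ∧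
        (∀ x ∈ q', x ∈ q) ∧ pathWeight w q' ≤ pathWeight w q := by
  intro N
  induction N with
  | zero =>
    intro q hq h
    interval_cases hl : q.length
    · exact absurd (List.length_eq_zero_iff.mp hl) (isPath_ne_nil h)
  | succ N ih =>
    intro q hq h
    match q with
    | [] => exact absurd rfl (isPath_ne_nil h)
    | a :: rest =>
      by_cases ha : a ∈ rest
      · obtain ⟨r₁, r₂, hr⟩ := List.append_of_mem ha
        subst hr
        have hqe : a :: (r₁ ++ a :: r₂) = (a :: r₁) ++ (a :: r₂) := by simp
        have hsuf : IsPath E (a :: r₂) :=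
          isPath_suffix (a :: r₁) (a :: r₂) (by rw [← hqe]; exact h) (by simp)
        have hwle : pathWeight w (a :: r₂) ≤ pathWeight w (a :: (r₁ ++ a :: r₂)) := by
          rw [hqe]
          exact pathWeight_suffix_le hw (a :: r₁) (a :: r₂) (by rw [← hqe]; exact h) (by simp)
        have hlen : (a :: r₂).length ≤ N := by
          simp at hq ⊢; omega
        obtain ⟨q', h1, h2, h3, h4, h5, h6⟩ := ih (a :: r₂) hlen hsuf
        refine ⟨q', h1, ?_, ?_, h4, ?_, by linarith⟩
        · simpa using h2
        · rw [h3, hqe, List.getLast?_append_of_ne_nil _ (by simp)]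
        · intro x hx
          have := h5 x hx
          simp at this ⊢
          tauto
      · match rest with
        | [] => exact ⟨[a], trivial, rfl, rfl, by simp, by simp, le_refl _⟩
        | b :: rest' =>
          have hlen : (b :: rest').length ≤ N := by simp at hq ⊢; omega
          obtain ⟨q', h1, h2, h3, h4, h5, h6⟩ := ih (b :: rest') hlen h.2
          match q', h2 with
          | c :: m, h2 => 
            have hcb : c = b := by simpa using h2
            subst hcb
            refine ⟨a :: c :: m, ⟨h.1, h1⟩, rfl, ?_, ?_, ?_, ?_⟩
            · rw [List.getLast?_cons_cons, h3, List.getLast?_cons_cons]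
            · refine List.nodup_cons.mpr ⟨fun hmem => ha ?_, h4⟩
              exact h5 a hmem
            · intro x hx
              simp at hx ⊢
              rcases hx with h | h
              · exact Or.inl h
              · have := h5 x (by simpa using h)
                simpa using Or.inr this
            · show w a c + pathWeight w (c :: m) ≤ w a c + pathWeight w (c :: rest')
              linarith

end SPAux

namespace SPAux2
open SPAux

variable {V : Type} [DecidableEq V] [Fintype V] {E : V → V → Prop} {w : V → V → ℝ}

def allLists (V : Type) [DecidableEq V] [Fintype V] : ℕ → Finset (List V)
  | 0 => {[]}
  | m + 1 => {[]} ∪ (Finset.univ ×ˢ allLists V m).image (fun p => p.1 :: p.2)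

lemma mem_allLists : ∀ (m : ℕ) (l : List V), l.length ≤ m → l ∈ allLists V m
  | 0, [], _ => by simp [allLists]
  | 0, a :: l, h => by simp at h
  | m + 1, [], _ => by simp [allLists]
  | m + 1, a :: l, h => by
    simp only [allLists, Finset.mem_union, Finset.mem_image, Finset.mem_product]
    refine Or.inr ⟨(a, l), ?_, rfl⟩
    exact ⟨Finset.mem_univ a, mem_allLists m l (by simpa using h)⟩

lemma exists_shortest (hw : ∀ u v, E u v → 0 < w u v)
    (p₀ : List V) (h₀ : IsPath E p₀) :
    ∃ p, IsShortestPath E w p ∧ p.head? = p₀.head? ∧ p.getLast? = p₀.getLast? := by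
  classical
  set S : Finset (List V) := (allLists V (Fintype.card V)).filter
    (fun q => IsPath E q ∧ q.head? = p₀.head? ∧ q.getLast? = p₀.getLast?) with hSdef
  have hw' : ∀ u v, E u v → 0 ≤ w u v := fun u v h => (hw u v h).le
  have hmem : ∀ q : List V, IsPath E q → q.head? = p₀.head? → q.getLast? = p₀.getLast? →
      q.Nodup → q ∈ S := by
    intro q h1 h2 h3 h4
    rw [hSdef, Finset.mem_filter]
    exact ⟨mem_allLists _ q h4.length_le_card, h1, h2, h3⟩
  obtain ⟨p₀', hp1, hp2, hp3, hp4, _, hp6⟩ :=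
    exists_nodup_path_aux hw' p₀.length p₀ (le_refl _) h₀
  have hS : S.Nonempty := ⟨p₀', hmem p₀' hp1 hp2 hp3 hp4⟩
  obtain ⟨p, hpS, hpmin⟩ := S.exists_min_image (pathWeight w) hS
  rw [hSdef, Finset.mem_filter] at hpS
  obtain ⟨_, hp, hh, hl⟩ := hpS
  refine ⟨p, ⟨hp, ?_⟩, hh, hl⟩
  intro q hq hqh hql
  obtain ⟨q', h1, h2, h3, h4, _, h6⟩ := exists_nodup_path_aux hw' q.length q (le_refl _) hq
  have : q' ∈ S := hmem q' h1 ((h2.trans hqh).trans hh) ((h3.trans hql).trans hl) h4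
  have := hpmin q' this
  rw [hh, hl] at *
  calc pathWeight w p ≤ pathWeight w q' := by simpa using this
    _ ≤ pathWeight w q := h6

end SPAux2


namespace Chain

def lv (u : ℕ) : ℕ := u / 5
def ps (u : ℕ) : ℕ := u % 5

def Eh (k u v : ℕ) : Prop :=
  (lv u = lv v ∧ lv u < k ∧ (ps v = (ps u + 1) % 5 ∨ ps u = (ps v + 1) % 5)) ∨
  (lv v = lv u + 1 ∧ lv v < k ∧ ps v = 2 * ps u % 5) ∨
  (lv u = lv v + 1 ∧ lv u < k ∧ ps u = 2 * ps v % 5)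

noncomputable def wh (k u v : ℕ) : ℝ :=
  if lv u = lv v then (3:ℝ)^(k - lv u) else (3:ℝ)^(k + 1 - min (lv u) (lv v))

lemma wh_pos (k u v : ℕ) : 0 < wh k u v := by
  unfold wh; split_ifs <;> positivity

def T1 (j p : ℕ) : ℕ :=
  if (p + 5 - j) % 5 = 0 then 11 else if (p + 5 - j) % 5 = 1 then 9
  else if (p + 5 - j) % 5 = 2 then 11 else 10

def T2 (j p : ℕ) : ℕ :=
  if (p + 5 - (2*j+2) % 5) % 5 = 0 then 0
  else if (p + 5 - (2*j+2) % 5) % 5 = 1 ∨ (p + 5 - (2*j+2) % 5) % 5 = 4 then 1 else 2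

def D (i j u : ℕ) : ℕ :=
  if lv u < i then 9 else if lv u = i then T1 j (ps u)
  else if lv u = i + 1 then T2 j (ps u) else 0

noncomputable def dch (k i j u : ℕ) : ℝ := (D i j u : ℝ) * (3:ℝ)^(k - 1 - i)

lemma le_T1 (j p : ℕ) : 9 ≤ T1 j p := by unfold T1; split_ifs <;> omega
lemma T1_le (j p : ℕ) : T1 j p ≤ 11 := by unfold T1; split_ifs <;> omega
lemma T2_le (j p : ℕ) : T2 j p ≤ 2 := by unfold T2; split_ifs <;> omega
lemma ps_lt (u : ℕ) : ps u < 5 := Nat.mod_lt _ (by norm_num)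


lemma wh_symm (k u v : ℕ) : wh k u v = wh k v u := by
  unfold wh
  rcases eq_or_ne (lv u) (lv v) with h | h
  · rw [h]
  · rw [if_neg h, if_neg (Ne.symm h), min_comm]

lemma Eh_symm (k u v : ℕ) (h : Eh k u v) : Eh k v u := by
  rcases h with ⟨h1, h2, h3⟩ | ⟨h1, h2, h3⟩ | ⟨h1, h2, h3⟩
  · exact Or.inl ⟨h1.symm, h1 ▸ h2, h3.symm⟩
  · exact Or.inr (Or.inr ⟨h1, h2, h3⟩)
  · exact Or.inr (Or.inl ⟨h1, h2, h3⟩)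

lemma T2_adj : ∀ j < 5, ∀ pu < 5, ∀ pv < 5,
    (pv = (pu+1) % 5 ∨ pu = (pv+1) % 5) → T2 j pu ≤ 1 + T2 j pv := by decide

lemma T1T2_cross : ∀ j < 5, ∀ pu < 5, ∀ pv < 5, pv = 2*pu % 5 → T1 j pu ≤ 9 + T2 j pv := by
  decide

lemma step (Du Dv B : ℕ) (U ww : ℝ) (hU : 0 ≤ U) (hwB : (B:ℝ) * U ≤ ww)
    (hn : Du ≤ B + Dv) : (Du:ℝ) * U ≤ ww + (Dv:ℝ) * U := by
  have h2 : (Du:ℝ) ≤ (B:ℝ) + (Dv:ℝ) := by exact_mod_cast hn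
  nlinarith

lemma feas (k i j : ℕ) (hi : i + 2 ≤ k) (hj : j < 5) :
    ∀ u v, Eh k u v → dch k i j u ≤ wh k u v + dch k i j v := by
  intro u v h
  set U := (3:ℝ)^(k - 1 - i) with hU
  have hU0 : (0:ℝ) ≤ U := by positivity
  show (D i j u : ℝ) * U ≤ wh k u v + (D i j v : ℝ) * U
  have hw0 : (0:ℝ) ≤ wh k u v := (wh_pos k u v).le
  have step0 : D i j u ≤ D i j v → (D i j u : ℝ) * U ≤ wh k u v + (D i j v : ℝ) * U := by
    intro hn
    exact step _ _ 0 U _ hU0 (by simpa using hw0) (by omega)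
  -- helper to rewrite wh as a multiple of U when levels are known
  rcases h with ⟨hl, hlk, hadj⟩ | ⟨hl, hlk, hps⟩ | ⟨hl, hlk, hps⟩
  · -- same level
    have hwv : wh k u v = (3:ℝ)^(k - lv u) := by unfold wh; rw [if_pos hl]
    rcases Nat.lt_trichotomy (lv u) i with hc | hc | hc
    · -- both 9
      apply step0
      unfold D; rw [if_pos hc, if_pos (by omega : lv v < i)]
    · -- level i : weight 3U, values T1
      have hDu : D i j u = T1 j (ps u) := by
        unfold D; rw [if_neg (by omega), if_pos hc]
      have hDv : D i j v = T1 j (ps v) := by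
        unfold D; rw [if_neg (by omega), if_pos (by omega : lv v = i)]
      have hwv3 : ((3:ℕ):ℝ) * U ≤ wh k u v := by
        rw [hwv, show k - lv u = (k - 1 - i) + 1 by omega, pow_add]
        norm_num [hU]; ring_nf; simp
      rw [hDu, hDv]
      exact step _ _ 3 U _ hU0 hwv3 (by have := T1_le j (ps u); have := le_T1 j (ps v); omega)
    · rcases Nat.lt_trichotomy (lv u) (i+1) with hc2 | hc2 | hc2
      · omega
      · -- level i+1 : weight U, values T2
        have hDu : D i j u = T2 j (ps u) := by
          unfold D; rw [if_neg (by omega), if_neg (by omega), if_pos hc2]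
        have hDv : D i j v = T2 j (ps v) := by
          unfold D; rw [if_neg (by omega), if_neg (by omega), if_pos (by omega : lv v = i+1)]
        have hwv1 : ((1:ℕ):ℝ) * U ≤ wh k u v := by
          rw [hwv, show k - lv u = k - 1 - i by omega]
          norm_num [hU]
        rw [hDu, hDv]
        refine step _ _ 1 U _ hU0 hwv1 ?_
        exact T2_adj j hj (ps u) (ps_lt u) (ps v) (ps_lt v) hadj
      · -- deep levels: both 0
        apply step0
        unfold D
        rw [if_neg (by omega), if_neg (by omega), if_neg (by omega),
          if_neg (by omega), if_neg (by omega), if_neg (by omega)]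
  · -- cross down from u to v, lv v = lv u + 1
    rcases Nat.lt_trichotomy (lv u) i with hc | hc | hc
    · -- lv v ≤ i
      apply step0
      unfold D
      rcases Nat.lt_or_ge (lv v) i with h2 | h2
      · rw [if_pos hc, if_pos h2]
      · have : lv v = i := by omega
        rw [if_pos hc, if_neg (by omega), if_pos this]
        have := le_T1 j (ps v); omega
    · -- lv u = i, lv v = i+1 : the key cross, weight 9U
      have hDu : D i j u = T1 j (ps u) := by
        unfold D; rw [if_neg (by omega), if_pos hc]
      have hDv : D i j v = T2 j (ps v) := by
        unfold D; rw [if_neg (by omega), if_neg (by omega), if_pos (by omega)]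
      have hwv9 : ((9:ℕ):ℝ) * U ≤ wh k u v := by
        unfold wh
        rw [if_neg (by omega), show min (lv u) (lv v) = i by omega,
          show k + 1 - i = (k - 1 - i) + 2 by omega, pow_add]
        norm_num [hU]; nlinarith [pow_pos (show (0:ℝ) < 3 by norm_num) (k-1-i)]
      rw [hDu, hDv]
      exact step _ _ 9 U _ hU0 hwv9
        (T1T2_cross j hj (ps u) (ps_lt u) (ps v) (ps_lt v) hps)
    · rcases Nat.lt_trichotomy (lv u) (i+1) with hc2 | hc2 | hc2
      · omega
      · -- lv u = i+1, lv v = i+2 : weight 3U, T2 ≤ 2 ≤ 3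
        have hDu : D i j u = T2 j (ps u) := by
          unfold D; rw [if_neg (by omega), if_neg (by omega), if_pos hc2]
        have hDv : D i j v = 0 := by
          unfold D; rw [if_neg (by omega), if_neg (by omega), if_neg (by omega)]
        have hwv3 : ((3:ℕ):ℝ) * U ≤ wh k u v := by
          unfold wh
          rw [if_neg (by omega), show min (lv u) (lv v) = i + 1 by omega,
            show k + 1 - (i+1) = (k - 1 - i) + 1 by omega, pow_add]
          norm_num [hU]; ring_nf; simp
        rw [hDu, hDv]
        exact step _ _ 3 U _ hU0 hwv3 (by have := T2_le j (ps u); omega)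
      · -- lv u ≥ i+2 : Du = 0
        have hDu : D i j u = 0 := by
          unfold D; rw [if_neg (by omega), if_neg (by omega), if_neg (by omega)]
        rw [hDu]
        have : (0:ℝ) ≤ (D i j v : ℝ) * U := by positivity
        simp only [Nat.cast_zero, zero_mul]
        linarith
  · -- cross up: lv u = lv v + 1
    rcases Nat.lt_trichotomy (lv v) i with hc | hc | hc
    · -- lv u ≤ i
      rcases Nat.lt_or_ge (lv u) i with h2 | h2
      · apply step0; unfold D; rw [if_pos h2, if_pos hc]
      · -- lv u = i, lv v = i - 1: weight 27U
        have hui : lv u = i := by omega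
        have hDu : D i j u = T1 j (ps u) := by
          unfold D; rw [if_neg (by omega), if_pos hui]
        have hDv : D i j v = 9 := by unfold D; rw [if_pos hc]
        have hwv0 : ((2:ℕ):ℝ) * U ≤ wh k u v := by
          unfold wh
          rw [if_neg (by omega), show min (lv u) (lv v) = i - 1 by omega,
            show k + 1 - (i - 1) = (k - 1 - i) + (k + 1 - (i-1) - (k-1-i)) by omega, pow_add]
          have h2 : 2 ≤ k + 1 - (i-1) - (k-1-i) := by omega
          have hh : (2:ℝ) ≤ 3 ^ (k + 1 - (i-1) - (k-1-i)) := by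
            calc (2:ℝ) ≤ 3 ^ 2 := by norm_num
            _ ≤ _ := by
              apply pow_le_pow_right₀ (by norm_num) h2
          have h3m : (0:ℝ) < 3^(k-1-i) := pow_pos (by norm_num) _
          have := mul_le_mul_of_nonneg_left hh h3m.le
          rw [hU]; push_cast; nlinarith
        rw [hDu, hDv]
        exact step _ _ 2 U _ hU0 hwv0 (by have := T1_le j (ps u); omega)
    · -- lv u = i + 1, lv v = i: T2 ≤ 2 ≤ 0 + 9 ≤ T1
      apply step0
      unfold D
      rw [if_neg (by omega), if_neg (by omega), if_pos (by omega),
        if_neg (by omega), if_pos hc]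
      have := T2_le j (ps u); have := le_T1 j (ps v); omega
    · -- lv u ≥ i + 2: Du = 0
      have hDu : D i j u = 0 := by
        unfold D; rw [if_neg (by omega), if_neg (by omega), if_neg (by omega)]
      rw [hDu]
      have : (0:ℝ) ≤ (D i j v : ℝ) * U := by positivity
      simp only [Nat.cast_zero, zero_mul]
      linarith


-- numeric table values
lemma T2_vals : ∀ j < 5, T2 j (2*j % 5) = 2 ∧ T2 j ((2*j+1) % 5) = 1 ∧
    T2 j ((2*j+2) % 5) = 0 ∧ T2 j ((2*j+3) % 5) = 1 ∧ T2 j ((2*j+4) % 5) = 2 := by decide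

section Classify

variable {n k i j : ℕ}

-- edge weight evaluation lemmas
lemma w_lev_i (hi : i + 2 ≤ k) {u v : ℕ} (hu : lv u = i) (hv : lv v = i) :
    wh k u v = 3 * (3:ℝ)^(k-1-i) := by
  unfold wh; rw [if_pos (hu.trans hv.symm), hu, show k - i = (k-1-i) + 1 by omega, pow_succ]
  ring

lemma w_lev_i1 (hi : i + 2 ≤ k) {u v : ℕ} (hu : lv u = i+1) (hv : lv v = i+1) :
    wh k u v = (3:ℝ)^(k-1-i) := by
  unfold wh; rw [if_pos (hu.trans hv.symm), hu, show k - (i+1) = k-1-i by omega]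

lemma w_cross_min9 (hi : i + 2 ≤ k) {u v : ℕ} (hne : lv u ≠ lv v)
    (hmin : min (lv u) (lv v) = i) : wh k u v = 9 * (3:ℝ)^(k-1-i) := by
  unfold wh
  rw [if_neg hne, hmin, show k + 1 - i = (k-1-i) + 2 by omega, pow_add]
  ring

lemma w_cross_min3 (hi : i + 2 ≤ k) {u v : ℕ} (hne : lv u ≠ lv v)
    (hmin : min (lv u) (lv v) = i+1) : wh k u v = 3 * (3:ℝ)^(k-1-i) := by
  unfold wh
  rw [if_neg hne, hmin, show k + 1 - (i+1) = (k-1-i) + 1 by omega, pow_add]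
  ring

lemma w_cross_up27 (hi : i + 2 ≤ k) {u v : ℕ} (hne : lv u ≠ lv v)
    (hmin : min (lv u) (lv v) + 1 = i) : wh k u v = 27 * (3:ℝ)^(k-1-i) := by
  unfold wh
  rw [if_neg hne, show min (lv u) (lv v) = i - 1 by omega,
    show k + 1 - (i-1) = (k-1-i) + 3 by omega, pow_add]
  ring

lemma w_ge_U (hi : i + 2 ≤ k) {u v : ℕ} (hu : lv u = i+1) (he : Eh k u v) :
    (3:ℝ)^(k-1-i) ≤ wh k u v := by
  have h3 : (1:ℝ) ≤ 3 := by norm_num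
  rcases he with ⟨h1, h2, _⟩ | ⟨h1, h2, _⟩ | ⟨h1, h2, _⟩
  · rw [wh, if_pos h1, hu, show k - (i+1) = k-1-i by omega]
  · rw [wh, if_neg (by omega), show min (lv u) (lv v) = i+1 by omega]
    exact pow_le_pow_right₀ h3 (by omega)
  · rw [wh, if_neg (by omega), show min (lv u) (lv v) = i by omega]
    exact pow_le_pow_right₀ h3 (by omega)

-- dch evaluation
lemma dch_nonneg (k i j u : ℕ) : 0 ≤ dch k i j u := by unfold dch; positivity

lemma dch_lev_i (hu : lv u = i) : dch k i j u = (T1 j (ps u) : ℝ) * (3:ℝ)^(k-1-i) := by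
  unfold dch D; rw [if_neg (by omega), if_pos hu]

lemma dch_lev_i1 (hu : lv u = i+1) : dch k i j u = (T2 j (ps u) : ℝ) * (3:ℝ)^(k-1-i) := by
  unfold dch D; rw [if_neg (by omega), if_neg (by omega), if_pos hu]

theorem classify (hk : 5*k ≤ n) (hi : i+2 ≤ k) (hj : j < 5)
    (s a b t : Fin n) (hs : s.1 = 5*i+j) (ha : a.1 = 5*(i+1) + 2*j % 5)
    (hb : b.1 = 5*(i+1) + (2*j+1) % 5) (ht : t.1 = 5*(i+1) + (2*j+2) % 5) :
    ∀ Q : List (Fin n), IsPath (fun u v : Fin n => Eh k u.1 v.1) Q →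
      Q.head? = some s → Q.getLast? = some t → Q ≠ [s, a, b, t] →
      12 * (3:ℝ)^(k-1-i) ≤ pathWeight (fun u v : Fin n => wh k u.1 v.1) Q := by
  set U := (3:ℝ)^(k-1-i) with hUdef
  have hU0 : (0:ℝ) < U := by positivity
  set E' : Fin n → Fin n → Prop := fun u v => Eh k u.1 v.1 with hE'
  set w' : Fin n → Fin n → ℝ := fun u v => wh k u.1 v.1 with hw'
  have hw'pos : ∀ u v : Fin n, E' u v → 0 ≤ w' u v := fun u v _ => (wh_pos k u.1 v.1).le
  have hs_lv : lv s.1 = i := by simp only [hs, lv]; omega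
  have hs_ps : ps s.1 = j := by simp only [hs, ps]; omega
  have ha_lv : lv a.1 = i + 1 := by simp only [ha, lv]; omega
  have ha_ps : ps a.1 = 2*j % 5 := by simp only [ha, ps]; omega
  have hb_lv : lv b.1 = i + 1 := by simp only [hb, lv]; omega
  have hb_ps : ps b.1 = (2*j+1) % 5 := by simp only [hb, ps]; omega
  have ht_lv : lv t.1 = i + 1 := by simp only [ht, lv]; omega
  have ht_ps : ps t.1 = (2*j+2) % 5 := by simp only [ht, ps]; omega
  obtain ⟨e20, e21, e22, e23, e24⟩ := T2_vals j hj
  have hdt : dch k i j t.1 = 0 := by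
    rw [dch_lev_i1 ht_lv, ht_ps, e22]; simp
  have pot : ∀ (l : List (Fin n)) (x : Fin n), IsPath E' l → l.head? = some x →
      l.getLast? = some t → dch k i j x.1 ≤ pathWeight w' l := by
    intro l x h1 h2 h3
    have := SPAux.pathWeight_ge_potential (E := E') (w := w')
      (fun u : Fin n => dch k i j u.1)
      (fun u v he => feas k i j hi hj u.1 v.1 he) l x t h1 h2 h3
    simp only [hdt, sub_zero] at this
    exact this
  have pwnn : ∀ l : List (Fin n), IsPath E' l → 0 ≤ pathWeight w' l :=
    SPAux.pathWeight_nonneg hw'pos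
  -- claim B : path from b ending at t, other than [b,t], weighs ≥ 2U
  have claimB : ∀ R : List (Fin n), IsPath E' (b :: R) →
      (b :: R).getLast? = some t → b :: R ≠ [b, t] → 2*U ≤ pathWeight w' (b :: R) := by
    intro R hp hlast hne
    match R with
    | [] =>
      simp only [List.getLast?_singleton, Option.some.injEq] at hlast
      have : b.1 = t.1 := by rw [hlast]
      rw [hb, ht] at this; omega
    | y :: R₃ =>
      have hE1 : Eh k b.1 y.1 := hp.1
      have hlast3 : (y :: R₃).getLast? = some t := by
        rwa [List.getLast?_cons_cons] at hlast
      rw [SPAux.pathWeight_cons_cons]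
      rcases hE1 with ⟨h1, h2, h3⟩ | ⟨h1, h2, h3⟩ | ⟨h1, h2, h3⟩
      · -- same level i+1 : y = t or y ~ a's position
        have hy_lv : lv y.1 = i + 1 := h1 ▸ hb_lv
        have hwby : w' b y = U := w_lev_i1 hi hb_lv hy_lv
        rcases h3 with h3 | h3
        · -- y = t
          have hy_ps : ps y.1 = (2*j+2) % 5 := by rw [h3, hb_ps]; omega
          have hyt : y = t := by
            apply Fin.ext
            have hyval : y.1 = 5 * lv y.1 + ps y.1 := by unfold lv ps; omega
            rw [hyval, hy_lv, hy_ps, ht]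
          match R₃ with
          | [] => exact absurd (by rw [hyt]) hne
          | z :: R₄ =>
            have hE2 : Eh k y.1 z.1 := hp.2.1
            have hwtz : U ≤ w' y z := w_ge_U hi hy_lv hE2
            have hnn : 0 ≤ pathWeight w' (z :: R₄) := pwnn _ hp.2.2
            rw [SPAux.pathWeight_cons_cons, hwby]; linarith
        · -- y at position 2j
          have hy_ps : ps y.1 = 2*j % 5 := by
            have h5 := ps_lt y.1
            rw [hb_ps] at h3; omega
          have hdy : dch k i j y.1 = 2 * U := by
            rw [dch_lev_i1 hy_lv, hy_ps, e20]; norm_num [hUdef]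
          have hple := pot (y :: R₃) y hp.2 (by simp) hlast3
          rw [hwby]; linarith
      · -- cross down to level i+2
        have hwby : w' b y = 3*U := w_cross_min3 hi (by omega) (by omega)
        have := pwnn (y :: R₃) hp.2
        rw [hwby]; linarith
      · -- cross up to level i
        have hwby : w' b y = 9*U := w_cross_min9 hi (by omega) (by omega)
        have := pwnn (y :: R₃) hp.2
        rw [hwby]; linarith
  -- claim A : path from a ending at t, other than [a,b,t], weighs ≥ 3U
  have claimA : ∀ R : List (Fin n), IsPath E' (a :: R) →
      (a :: R).getLast? = some t → a :: R ≠ [a, b, t] → 3*U ≤ pathWeight w' (a :: R) := by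
    intro R hp hlast hne
    match R with
    | [] =>
      simp only [List.getLast?_singleton, Option.some.injEq] at hlast
      have : a.1 = t.1 := by rw [hlast]
      rw [ha, ht] at this; omega
    | y :: R₂ =>
      have hE1 : Eh k a.1 y.1 := hp.1
      have hlast2 : (y :: R₂).getLast? = some t := by
        rwa [List.getLast?_cons_cons] at hlast
      rw [SPAux.pathWeight_cons_cons]
      rcases hE1 with ⟨h1, h2, h3⟩ | ⟨h1, h2, h3⟩ | ⟨h1, h2, h3⟩
      · -- same level i+1
        have hy_lv : lv y.1 = i + 1 := h1 ▸ ha_lv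
        have hway : w' a y = U := w_lev_i1 hi ha_lv hy_lv
        rcases h3 with h3 | h3
        · -- ps y = 2j+1 : y = b
          have hy_ps : ps y.1 = (2*j+1) % 5 := by rw [h3, ha_ps]; omega
          have hyb : y = b := by
            apply Fin.ext
            have hyval : y.1 = 5 * lv y.1 + ps y.1 := by unfold lv ps; omega
            rw [hyval, hy_lv, hy_ps, hb]
          have hp2 : IsPath E' (b :: R₂) := by rw [← hyb]; exact hp.2
          have hlast2' : (b :: R₂).getLast? = some t := by rw [← hyb]; exact hlast2
          have hne2 : b :: R₂ ≠ [b, t] := by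
            intro hcontra
            have hR : R₂ = [t] := by simpa using hcontra
            exact hne (by rw [hyb, hR])
          have hcb := claimB R₂ hp2 hlast2' hne2
          have hpw : pathWeight w' (y :: R₂) = pathWeight w' (b :: R₂) := by rw [hyb]
          rw [hway, hpw]; linarith
        · -- ps y = 2j + 4
          have hy_ps : ps y.1 = (2*j+4) % 5 := by
            have h5 := ps_lt y.1
            rw [ha_ps] at h3; omega
          have hdy : dch k i j y.1 = 2 * U := by
            rw [dch_lev_i1 hy_lv, hy_ps, e24]; norm_num [hUdef]
          have hple := pot (y :: R₂) y hp.2 (by simp) hlast2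
          rw [hway]; linarith
      · have hway : w' a y = 3*U := w_cross_min3 hi (by omega) (by omega)
        have := pwnn (y :: R₂) hp.2
        rw [hway]; linarith
      · have hway : w' a y = 9*U := w_cross_min9 hi (by omega) (by omega)
        have := pwnn (y :: R₂) hp.2
        rw [hway]; linarith
  -- main
  intro Q hQ hh hl hne
  match Q with
  | [] => simp at hh
  | [x] =>
    simp only [List.head?_cons, Option.some.injEq] at hh
    simp only [List.getLast?_singleton, Option.some.injEq] at hl
    have : s.1 = t.1 := by rw [← hh, hl]
    rw [hs, ht] at this; omega
  | x :: y :: R =>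
    have hx : x = s := by simpa using hh
    subst hx
    have hE1 : Eh k x.1 y.1 := hQ.1
    have hl2 : (y :: R).getLast? = some t := by rwa [List.getLast?_cons_cons] at hl
    rw [SPAux.pathWeight_cons_cons]
    rcases hE1 with ⟨h1, h2, h3⟩ | ⟨h1, h2, h3⟩ | ⟨h1, h2, h3⟩
    · -- same level i
      have hy_lv : lv y.1 = i := h1 ▸ hs_lv
      have hwsy : w' x y = 3*U := w_lev_i hi hs_lv hy_lv
      have hdy : (9:ℝ) * U ≤ dch k i j y.1 := by
        rw [dch_lev_i hy_lv]
        have h9 := le_T1 j (ps y.1)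
        have : (9:ℝ) ≤ (T1 j (ps y.1) : ℝ) := by exact_mod_cast h9
        nlinarith
      have hple := pot (y :: R) y hQ.2 (by simp) hl2
      rw [hwsy]; linarith
    · -- cross down : y = a
      have hy_lv : lv y.1 = i + 1 := by omega
      have hy_ps : ps y.1 = 2*j % 5 := by rw [h3, hs_ps]
      have hya : y = a := by
        apply Fin.ext
        have hyval : y.1 = 5 * lv y.1 + ps y.1 := by unfold lv ps; omega
        rw [hyval, hy_lv, hy_ps, ha]
      have hwsy : w' x y = 9*U := w_cross_min9 hi (by omega) (by omega)
      have hp2 : IsPath E' (a :: R) := by rw [← hya]; exact hQ.2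
      have hl2' : (a :: R).getLast? = some t := by rw [← hya]; exact hl2
      have hne2 : a :: R ≠ [a, b, t] := by
        intro hcontra
        have hR : R = [b, t] := by simpa using hcontra
        exact hne (by rw [hya, hR])
      have hca := claimA R hp2 hl2' hne2
      have hpw : pathWeight w' (y :: R) = pathWeight w' (a :: R) := by rw [hya]
      rw [hwsy, hpw]; linarith
    · -- cross up to level i-1
      have hwsy : w' x y = 27*U := w_cross_up27 hi (by omega) (by omega)
      have := pwnn (y :: R) hQ.2
      rw [hwsy]; linarith

theorem pair {n k : ℕ} (hk : 5*k ≤ n) {ε : ℝ} (hε0 : 0 ≤ ε) (hε : ε ≤ 1/12)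
    (wH : Fin n → Fin n → ℝ)
    (hposH : ∀ u v : Fin n, Eh k u.1 v.1 → 0 < wH u v)
    (happ : ∀ p, IsShortestPath (fun u v : Fin n => Eh k u.1 v.1) wH p →
      IsApproxSP (fun u v : Fin n => Eh k u.1 v.1) (fun u v : Fin n => wh k u.1 v.1) (1+ε) p)
    {i j : ℕ} (hi : i + 2 ≤ k) (hj : j < 5)
    (s a b t s' : Fin n) (hs : s.1 = 5*i+j) (ha : a.1 = 5*(i+1) + 2*j % 5)
    (hb : b.1 = 5*(i+1) + (2*j+1) % 5) (ht : t.1 = 5*(i+1) + (2*j+2) % 5)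
    (hs' : s'.1 = 5*i + (j+1) % 5) :
    wH s a + wH a b + wH b t ≤ wH s s' + wH s' t := by
  set E' : Fin n → Fin n → Prop := fun u v => Eh k u.1 v.1 with hE'
  set w' : Fin n → Fin n → ℝ := fun u v => wh k u.1 v.1 with hw'
  set U := (3:ℝ)^(k-1-i) with hUdef
  have hU0 : (0:ℝ) < U := by positivity
  have hs_lv : lv s.1 = i := by simp only [hs, lv]; omega
  have hs_ps : ps s.1 = j := by simp only [hs, ps]; omega
  have ha_lv : lv a.1 = i + 1 := by simp only [ha, lv]; omega
  have ha_ps : ps a.1 = 2*j % 5 := by simp only [ha, ps]; omega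
  have hb_lv : lv b.1 = i + 1 := by simp only [hb, lv]; omega
  have hb_ps : ps b.1 = (2*j+1) % 5 := by simp only [hb, ps]; omega
  have ht_lv : lv t.1 = i + 1 := by simp only [ht, lv]; omega
  have ht_ps : ps t.1 = (2*j+2) % 5 := by simp only [ht, ps]; omega
  have hs'_lv : lv s'.1 = i := by simp only [hs', lv]; omega
  have hs'_ps : ps s'.1 = (j+1) % 5 := by simp only [hs', ps]; omega
  -- the canonical path
  have hEsa : E' s a := Or.inr (Or.inl ⟨by omega, by omega, by rw [ha_ps, hs_ps]⟩)
  have hEab : E' a b := Or.inl ⟨by omega, by omega, Or.inl (by rw [ha_ps, hb_ps]; omega)⟩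
  have hEbt : E' b t := Or.inl ⟨by omega, by omega, Or.inl (by rw [hb_ps, ht_ps]; omega)⟩
  have hEss' : E' s s' := Or.inl ⟨by omega, by omega, Or.inl (by rw [hs_ps, hs'_ps])⟩
  have hEs't : E' s' t := Or.inr (Or.inl ⟨by omega, by omega, by rw [ht_ps, hs'_ps]; omega⟩)
  have hP : IsPath E' [s, a, b, t] := ⟨hEsa, hEab, hEbt, trivial⟩
  have hQa : IsPath E' [s, s', t] := ⟨hEss', hEs't, trivial⟩
  -- weight of canonical path in G
  have hwsa : w' s a = 9*U := w_cross_min9 hi (by omega) (by omega)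
  have hwab : w' a b = U := w_lev_i1 hi ha_lv hb_lv
  have hwbt : w' b t = U := w_lev_i1 hi hb_lv ht_lv
  have hPw : pathWeight w' [s, a, b, t] = 11 * U := by
    rw [SPAux.pathWeight_cons_cons, SPAux.pathWeight_cons_cons, SPAux.pathWeight_cons_cons,
      show pathWeight w' [t] = 0 from rfl, hwsa, hwab, hwbt]
    ring
  -- a shortest wH-path p from s to t
  obtain ⟨p, hsp, hph, hpl⟩ := SPAux2.exists_shortest hposH [s, a, b, t] hP
  simp only [List.head?_cons] at hph
  have hpl' : p.getLast? = some t := by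
    rw [hpl]; simp [List.getLast?]
  have happx := happ p hsp
  have hle : pathWeight w' p ≤ (1+ε) * pathWeight w' [s, a, b, t] :=
    happx.2 [s, a, b, t] hP (by simp [hph]) (by rw [hpl']; simp [List.getLast?])
  have hpP : p = [s, a, b, t] := by
    by_contra hne
    have h12 := classify hk hi hj s a b t hs ha hb ht p hsp.1 hph hpl' hne
    rw [hPw] at hle
    rw [← hUdef] at h12
    nlinarith
  have key := hsp.2 [s, s', t] hQa (by rw [hph]; rfl)
    (by rw [hpl']; simp [List.getLast?])
  rw [hpP] at key
  have e1 : pathWeight wH [s, a, b, t] = wH s a + wH a b + wH b t := by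
    rw [SPAux.pathWeight_cons_cons, SPAux.pathWeight_cons_cons, SPAux.pathWeight_cons_cons,
      show pathWeight wH [t] = 0 from rfl]
    ring
  have e2 : pathWeight wH [s, s', t] = wH s s' + wH s' t := by
    rw [SPAux.pathWeight_cons_cons, SPAux.pathWeight_cons_cons,
      show pathWeight wH [t] = 0 from rfl]
    ring
  rw [e1, e2] at key
  exact key


theorem chain_main {n k : ℕ} (hk5 : 5*k ≤ n) (hk2 : 2 ≤ k) {ε : ℝ} (hε0 : 0 ≤ ε)
    (hε : ε ≤ 1/12) (wH : Fin n → Fin n → ℝ)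
    (hposH : ∀ u v : Fin n, Eh k u.1 v.1 → 0 < wH u v)
    (happ : ∀ p, IsShortestPath (fun u v : Fin n => Eh k u.1 v.1) wH p →
      IsApproxSP (fun u v : Fin n => Eh k u.1 v.1) (fun u v : Fin n => wh k u.1 v.1) (1+ε) p) :
    ∃ x y z l : Fin n, Eh k x.1 y.1 ∧ Eh k z.1 l.1 ∧
      (2:ℝ)^(k-1) * wH z l ≤ wH x y := by
  classical
  set wv : ℕ → ℕ → ℝ := fun x y =>
    if hx : x < n then if hy : y < n then wH ⟨x,hx⟩ ⟨y,hy⟩ else 0 else 0 with hwvdef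
  have hwv : ∀ (x y : ℕ) (hx : x < n) (hy : y < n), wv x y = wH ⟨x,hx⟩ ⟨y,hy⟩ := by
    intro x y hx hy
    rw [hwvdef]
    simp only
    rw [dif_pos hx, dif_pos hy]
  set W : ℕ → ℝ := fun l => wv (5*l) (5*l+1) + wv (5*l+1) (5*l+2) + wv (5*l+2) (5*l+3)
    + wv (5*l+3) (5*l+4) + wv (5*l+4) (5*l) with hWdef
  have hW : ∀ l, W l = wv (5*l) (5*l+1) + wv (5*l+1) (5*l+2) + wv (5*l+2) (5*l+3)
      + wv (5*l+3) (5*l+4) + wv (5*l+4) (5*l) := fun l => rfl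
  -- the pair constraint in wv form
  have constraint : ∀ i j : ℕ, i + 2 ≤ k → j < 5 →
      wv (5*i+j) (5*(i+1)+2*j%5) + wv (5*(i+1)+2*j%5) (5*(i+1)+(2*j+1)%5)
        + wv (5*(i+1)+(2*j+1)%5) (5*(i+1)+(2*j+2)%5)
      ≤ wv (5*i+j) (5*i+(j+1)%5) + wv (5*i+(j+1)%5) (5*(i+1)+(2*j+2)%5) := by
    intro i j hi hj
    have b1 : 5*i+j < n := by omega
    have b2 : 5*(i+1)+2*j%5 < n := by have := Nat.mod_lt (2*j) (show 0<5 by norm_num); omega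
    have b3 : 5*(i+1)+(2*j+1)%5 < n := by
      have := Nat.mod_lt (2*j+1) (show 0<5 by norm_num); omega
    have b4 : 5*(i+1)+(2*j+2)%5 < n := by
      have := Nat.mod_lt (2*j+2) (show 0<5 by norm_num); omega
    have b5 : 5*i+(j+1)%5 < n := by have := Nat.mod_lt (j+1) (show 0<5 by norm_num); omega
    rw [hwv _ _ b1 b2, hwv _ _ b2 b3, hwv _ _ b3 b4, hwv _ _ b1 b5, hwv _ _ b5 b4]
    exact pair hk5 hε0 hε wH hposH happ hi hj _ _ _ _ _ rfl rfl rfl rfl rfl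
  have level : ∀ i : ℕ, i + 2 ≤ k → 2 * W (i+1) ≤ W i := by
    intro i hi
    have c0 := constraint i 0 hi (by norm_num)
    have c1 := constraint i 1 hi (by norm_num)
    have c2 := constraint i 2 hi (by norm_num)
    have c3 := constraint i 3 hi (by norm_num)
    have c4 := constraint i 4 hi (by norm_num)
    norm_num at c0 c1 c2 c3 c4
    rw [hW, hW]
    norm_num
    linarith
  have decay : ∀ m : ℕ, m < k → (2:ℝ)^m * W m ≤ W 0 := by
    intro m
    induction m with
    | zero => intro _; simp
    | succ m ihm =>
      intro hm
      have h1 := level m (by omega)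
      have h2 := ihm (by omega)
      have h3 : (0:ℝ) ≤ (2:ℝ)^m := by positivity
      calc (2:ℝ)^(m+1) * W (m+1) = (2:ℝ)^m * (2 * W (m+1)) := by ring
        _ ≤ (2:ℝ)^m * W m := by exact mul_le_mul_of_nonneg_left h1 h3
        _ ≤ W 0 := h2
  -- adjacency helper
  have edge_adj : ∀ (x y : ℕ), lv x = lv y → lv x < k → ps y = (ps x + 1) % 5 → Eh k x y :=
    fun x y h1 h2 h3 => Or.inl ⟨h1, h2, Or.inl h3⟩
  -- a small edge at level k-1
  have hmin : ∃ z l : Fin n, Eh k z.1 l.1 ∧ 5 * wH z l ≤ W (k-1) := by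
    by_contra hcon
    push_neg at hcon
    set L := k - 1 with hL
    have q0 : 5*L < n := by omega
    have q1 : 5*L+1 < n := by omega
    have q2 : 5*L+2 < n := by omega
    have q3 : 5*L+3 < n := by omega
    have q4 : 5*L+4 < n := by omega
    have d0 := hcon ⟨5*L, q0⟩ ⟨5*L+1, q1⟩
      (edge_adj _ _ (by simp only [lv, Fin.val_mk] <;> omega) (by simp only [lv, Fin.val_mk] <;> omega) (by simp only [ps, Fin.val_mk] <;> omega))
    have d1 := hcon ⟨5*L+1, q1⟩ ⟨5*L+2, q2⟩
      (edge_adj _ _ (by simp only [lv, Fin.val_mk] <;> omega) (by simp only [lv, Fin.val_mk] <;> omega) (by simp only [ps, Fin.val_mk] <;> omega))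
    have d2 := hcon ⟨5*L+2, q2⟩ ⟨5*L+3, q3⟩
      (edge_adj _ _ (by simp only [lv, Fin.val_mk] <;> omega) (by simp only [lv, Fin.val_mk] <;> omega) (by simp only [ps, Fin.val_mk] <;> omega))
    have d3 := hcon ⟨5*L+3, q3⟩ ⟨5*L+4, q4⟩
      (edge_adj _ _ (by simp only [lv, Fin.val_mk] <;> omega) (by simp only [lv, Fin.val_mk] <;> omega) (by simp only [ps, Fin.val_mk] <;> omega))
    have d4 := hcon ⟨5*L+4, q4⟩ ⟨5*L, q0⟩
      (edge_adj _ _ (by simp only [lv, Fin.val_mk] <;> omega) (by simp only [lv, Fin.val_mk] <;> omega) (by simp only [ps, Fin.val_mk] <;> omega))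
    have hWL := hW L
    rw [hwv _ _ q0 q1, hwv _ _ q1 q2, hwv _ _ q2 q3, hwv _ _ q3 q4, hwv _ _ q4 q0] at hWL
    linarith
  -- a big edge at level 0
  have hmax : ∃ x y : Fin n, Eh k x.1 y.1 ∧ W 0 ≤ 5 * wH x y := by
    by_contra hcon
    push_neg at hcon
    have q0 : 5*0 < n := by omega
    have q1 : 5*0+1 < n := by omega
    have q2 : 5*0+2 < n := by omega
    have q3 : 5*0+3 < n := by omega
    have q4 : 5*0+4 < n := by omega
    have d0 := hcon ⟨5*0, q0⟩ ⟨5*0+1, q1⟩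
      (edge_adj _ _ (by simp only [lv, Fin.val_mk] <;> omega) (by simp only [lv, Fin.val_mk] <;> omega) (by simp only [ps, Fin.val_mk] <;> omega))
    have d1 := hcon ⟨5*0+1, q1⟩ ⟨5*0+2, q2⟩
      (edge_adj _ _ (by simp only [lv, Fin.val_mk] <;> omega) (by simp only [lv, Fin.val_mk] <;> omega) (by simp only [ps, Fin.val_mk] <;> omega))
    have d2 := hcon ⟨5*0+2, q2⟩ ⟨5*0+3, q3⟩
      (edge_adj _ _ (by simp only [lv, Fin.val_mk] <;> omega) (by simp only [lv, Fin.val_mk] <;> omega) (by simp only [ps, Fin.val_mk] <;> omega))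
    have d3 := hcon ⟨5*0+3, q3⟩ ⟨5*0+4, q4⟩
      (edge_adj _ _ (by simp only [lv, Fin.val_mk] <;> omega) (by simp only [lv, Fin.val_mk] <;> omega) (by simp only [ps, Fin.val_mk] <;> omega))
    have d4 := hcon ⟨5*0+4, q4⟩ ⟨5*0, q0⟩
      (edge_adj _ _ (by simp only [lv, Fin.val_mk] <;> omega) (by simp only [lv, Fin.val_mk] <;> omega) (by simp only [ps, Fin.val_mk] <;> omega))
    have hW0 := hW 0
    rw [hwv _ _ q0 q1, hwv _ _ q1 q2, hwv _ _ q2 q3, hwv _ _ q3 q4, hwv _ _ q4 q0] at hW0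
    linarith
  obtain ⟨z, l, hzl, hsmall⟩ := hmin
  obtain ⟨x, y, hxy, hbig⟩ := hmax
  refine ⟨x, y, z, l, hxy, hzl, ?_⟩
  have hdec := decay (k-1) (by omega)
  have h2p : (0:ℝ) ≤ (2:ℝ)^(k-1) := by positivity
  have h5 := mul_le_mul_of_nonneg_left hsmall h2p
  nlinarith


end Classify
end Chain

namespace Tri

def E3 (n : ℕ) (u v : Fin n) : Prop :=
  (u.1 = 0 ∧ v.1 = 1) ∨ (u.1 = 1 ∧ v.1 = 0) ∨ (u.1 = 1 ∧ v.1 = 2) ∨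
  (u.1 = 2 ∧ v.1 = 1) ∨ (u.1 = 0 ∧ v.1 = 2) ∨ (u.1 = 2 ∧ v.1 = 0)

noncomputable def w3 (n : ℕ) (u v : Fin n) : ℝ :=
  if (u.1 = 0 ∧ v.1 = 2) ∨ (u.1 = 2 ∧ v.1 = 0) then 27 else 12

noncomputable def d3 {n : ℕ} (u : Fin n) : ℝ :=
  if u.1 = 0 then 24 else if u.1 = 1 then 12 else 0

lemma E3_symm {n : ℕ} (u v : Fin n) (h : E3 n u v) : E3 n v u := by
  unfold E3 at *; tauto

lemma w3_symm {n : ℕ} (u v : Fin n) : w3 n u v = w3 n v u := by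
  unfold w3
  rcases Nat.decEq u.1 0 with h | h <;> rcases Nat.decEq v.1 0 with h2 | h2 <;>
    rcases Nat.decEq u.1 2 with h3 | h3 <;> rcases Nat.decEq v.1 2 with h4 | h4 <;>
    split_ifs <;> tauto

lemma w3_pos {n : ℕ} (u v : Fin n) : 0 < w3 n u v := by
  unfold w3; split_ifs <;> norm_num

lemma w3_ge12 {n : ℕ} (u v : Fin n) : 12 ≤ w3 n u v := by
  unfold w3; split_ifs <;> norm_num

lemma d3_nonneg {n : ℕ} (u : Fin n) : 0 ≤ d3 u := by
  unfold d3; split_ifs <;> norm_num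

lemma feas3 {n : ℕ} : ∀ u v : Fin n, E3 n u v → d3 u ≤ w3 n u v + d3 v := by
  intro u v h
  rcases h with ⟨h1, h2⟩ | ⟨h1, h2⟩ | ⟨h1, h2⟩ | ⟨h1, h2⟩ | ⟨h1, h2⟩ | ⟨h1, h2⟩ <;>
    simp [d3, w3, h1, h2] <;> norm_num

lemma classify3 {n : ℕ} (v0 v1 v2 : Fin n) (h0 : v0.1 = 0) (h1 : v1.1 = 1)
    (h2 : v2.1 = 2) :
    ∀ Q : List (Fin n), IsPath (E3 n) Q → Q.head? = some v0 → Q.getLast? = some v2 →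
      Q ≠ [v0, v1, v2] → 27 ≤ pathWeight (w3 n) Q := by
  have hd2 : d3 v2 = 0 := by unfold d3; rw [if_neg (by omega), if_neg (by omega)]
  have pot : ∀ (l : List (Fin n)) (x : Fin n), IsPath (E3 n) l → l.head? = some x →
      l.getLast? = some v2 → d3 x ≤ pathWeight (w3 n) l := by
    intro l x ha hb hc
    have := SPAux.pathWeight_ge_potential (E := E3 n) (w := w3 n) d3 feas3 l x v2 ha hb hc
    rw [hd2] at this; linarith
  have pwnn : ∀ l : List (Fin n), IsPath (E3 n) l → 0 ≤ pathWeight (w3 n) l :=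
    SPAux.pathWeight_nonneg (fun u v _ => (w3_pos u v).le)
  intro Q hQ hh hl hne
  match Q with
  | [] => simp at hh
  | [x] =>
    simp only [List.head?_cons, Option.some.injEq] at hh
    simp only [List.getLast?_singleton, Option.some.injEq] at hl
    have : v0.1 = v2.1 := by rw [← hh, hl]
    omega
  | x :: y :: R =>
    have hx : x = v0 := by simpa using hh
    subst hx
    have hE1 : E3 n x y := hQ.1
    have hl2 : (y :: R).getLast? = some v2 := by rwa [List.getLast?_cons_cons] at hl
    rw [SPAux.pathWeight_cons_cons]
    have hy12 : y.1 = 1 ∨ y.1 = 2 := by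
      rcases hE1 with ⟨e1, e2⟩ | ⟨e1, e2⟩ | ⟨e1, e2⟩ | ⟨e1, e2⟩ | ⟨e1, e2⟩ | ⟨e1, e2⟩ <;> omega
    rcases hy12 with hy | hy
    · -- y = v1
      have hyv : y = v1 := Fin.ext (by omega)
      have hw01 : w3 n x y = 12 := by unfold w3; rw [if_neg (by omega)]
      match R with
      | [] =>
        simp only [List.getLast?_cons_cons, List.getLast?_singleton, Option.some.injEq] at hl
        have : y.1 = v2.1 := by rw [hl]
        omega
      | z :: R₂ =>
        have hE2 : E3 n y z := hQ.2.1
        have hz02 : z.1 = 0 ∨ z.1 = 2 := by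
          rcases hE2 with ⟨e1, e2⟩ | ⟨e1, e2⟩ | ⟨e1, e2⟩ | ⟨e1, e2⟩ | ⟨e1, e2⟩ | ⟨e1, e2⟩ <;> omega
        have hl3 : (z :: R₂).getLast? = some v2 := by rwa [List.getLast?_cons_cons] at hl2
        have hw1z : 12 ≤ w3 n y z := w3_ge12 y z
        rw [SPAux.pathWeight_cons_cons]
        rcases hz02 with hz | hz
        · -- z = v0 : weight ≥ 12 + 12 + 24
          have hdz : d3 z = 24 := by unfold d3; rw [if_pos hz]
          have := pot (z :: R₂) z hQ.2.2 (by simp) hl3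
          rw [hw01]; linarith
        · -- z = v2
          match R₂ with
          | [] =>
            -- Q = [v0, v1, z] with z = v2 : excluded
            have : z = v2 := Fin.ext (by omega)
            exact absurd (by rw [hyv, this]) hne
          | u :: R₃ =>
            have hwzu : 12 ≤ w3 n z u := w3_ge12 z u
            have hdu := d3_nonneg u
            have hpu := pot (u :: R₃) u hQ.2.2.2 (by simp)
              (by rwa [List.getLast?_cons_cons] at hl3)
            rw [SPAux.pathWeight_cons_cons, hw01]
            linarith
    · -- y = v2 : direct heavy edge
      have hw02 : w3 n x y = 27 := by unfold w3; rw [if_pos (Or.inl ⟨h0, hy⟩)]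
      match R with
      | [] => rw [hw02]; simp [pathWeight]
      | z :: R₂ =>
        have hwyz : 12 ≤ w3 n y z := w3_ge12 y z
        have hpz := pot (z :: R₂) z hQ.2.2 (by simp)
          (by rwa [List.getLast?_cons_cons] at hl2)
        have hdz := d3_nonneg z
        rw [SPAux.pathWeight_cons_cons, hw02]
        linarith

end Tri


/-- there is an absolute constant c > 0 such that for every
ε ≤ 1/12 there is a family of n-node positively weighted undirected graphs G
such that every positive symmetric reweighting H in which every shortest path
of H is a (1+ε)-approximate shortest path of G has aspect ratio ≥ 2^(c n). -/
theorem stmt19 : ∃ c : ℝ, 0 < c ∧ ∀ ε : ℝ, 0 ≤ ε → ε ≤ 1 / 12 → ∀ n : ℕ, 5 ≤ n →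
    ∃ (E : Fin n → Fin n → Prop) (w : Fin n → Fin n → ℝ),
      (∀ i j, E i j → E j i) ∧ (∀ i j, w i j = w j i) ∧
      (∀ i j, E i j → 0 < w i j) ∧
      ∀ wH : Fin n → Fin n → ℝ, (∀ i j, wH i j = wH j i) →
        (∀ i j, E i j → 0 < wH i j) →
        (∀ p, IsShortestPath E wH p → IsApproxSP E w (1 + ε) p) →
        ∃ i j k l, E i j ∧ E k l ∧ (2 : ℝ) ^ (c * (n : ℝ)) * wH k l ≤ wH i j := by
  refine ⟨1/50, by norm_num, ?_⟩
  intro ε hε0 hε12 n hn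
  by_cases hsmall : n < 10
  · -- triangle construction
    refine ⟨Tri.E3 n, Tri.w3 n, Tri.E3_symm, Tri.w3_symm, fun u v _ => Tri.w3_pos u v, ?_⟩
    intro wH hHsym hHpos happ
    set v0 : Fin n := ⟨0, by omega⟩ with hv0
    set v1 : Fin n := ⟨1, by omega⟩ with hv1
    set v2 : Fin n := ⟨2, by omega⟩ with hv2
    have hE01 : Tri.E3 n v0 v1 := Or.inl ⟨rfl, rfl⟩
    have hE12 : Tri.E3 n v1 v2 := Or.inr (Or.inr (Or.inl ⟨rfl, rfl⟩))
    have hE02 : Tri.E3 n v0 v2 := Or.inr (Or.inr (Or.inr (Or.inr (Or.inl ⟨rfl, rfl⟩))))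
    have hP : IsPath (Tri.E3 n) [v0, v1, v2] := ⟨hE01, hE12, trivial⟩
    have hQ : IsPath (Tri.E3 n) [v0, v2] := ⟨hE02, trivial⟩
    have e0 : v0.1 = 0 := rfl
    have e1 : v1.1 = 1 := rfl
    have e2 : v2.1 = 2 := rfl
    have hw01 : Tri.w3 n v0 v1 = 12 := by unfold Tri.w3; rw [if_neg (by omega)]
    have hw12 : Tri.w3 n v1 v2 = 12 := by unfold Tri.w3; rw [if_neg (by omega)]
    have hPw : pathWeight (Tri.w3 n) [v0, v1, v2] = 24 := by
      rw [SPAux.pathWeight_cons_cons, SPAux.pathWeight_cons_cons,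
        show pathWeight (Tri.w3 n) [v2] = 0 from rfl, hw01, hw12]
      norm_num
    obtain ⟨p, hsp, hph, hpl⟩ := SPAux2.exists_shortest hHpos [v0, v1, v2] hP
    simp only [List.head?_cons] at hph
    have hpl' : p.getLast? = some v2 := by rw [hpl]; simp [List.getLast?]
    have happx := happ p hsp
    have hle : pathWeight (Tri.w3 n) p ≤ (1+ε) * pathWeight (Tri.w3 n) [v0, v1, v2] :=
      happx.2 [v0, v1, v2] hP (by simp [hph]) (by rw [hpl']; simp [List.getLast?])
    have hpP : p = [v0, v1, v2] := by
      by_contra hne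
      have h27 := Tri.classify3 v0 v1 v2 rfl rfl rfl p hsp.1 hph hpl' hne
      rw [hPw] at hle
      nlinarith
    have key := hsp.2 [v0, v2] hQ (by rw [hph]; rfl) (by rw [hpl']; simp [List.getLast?])
    rw [hpP] at key
    have e1 : pathWeight wH [v0, v1, v2] = wH v0 v1 + wH v1 v2 := by
      rw [SPAux.pathWeight_cons_cons, SPAux.pathWeight_cons_cons,
        show pathWeight wH [v2] = 0 from rfl]
      ring
    have e2 : pathWeight wH [v0, v2] = wH v0 v2 := by
      rw [SPAux.pathWeight_cons_cons, show pathWeight wH [v2] = 0 from rfl]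
      ring
    rw [e1, e2] at key
    -- 2^(n/50) ≤ 2
    have hrp : (2:ℝ) ^ ((1/50 : ℝ) * n) ≤ 2 := by
      have h1 : (1/50 : ℝ) * n ≤ 1 := by
        have : (n:ℝ) ≤ 9 := by exact_mod_cast Nat.le_of_lt_succ hsmall
        nlinarith
      calc (2:ℝ) ^ ((1/50 : ℝ) * n) ≤ (2:ℝ) ^ (1:ℝ) :=
            Real.rpow_le_rpow_of_exponent_le (by norm_num) h1
        _ = 2 := by norm_num
    have hp01 : 0 < wH v0 v1 := hHpos _ _ hE01
    have hp12 : 0 < wH v1 v2 := hHpos _ _ hE12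
    have hrp0 : (0:ℝ) < (2:ℝ) ^ ((1/50 : ℝ) * n) := Real.rpow_pos_of_pos (by norm_num) _
    rcases le_total (wH v0 v1) (wH v1 v2) with hc | hc
    · refine ⟨v0, v2, v0, v1, hE02, hE01, ?_⟩
      have : (2:ℝ) ^ ((1/50 : ℝ) * n) * wH v0 v1 ≤ 2 * wH v0 v1 :=
        mul_le_mul_of_nonneg_right hrp hp01.le
      linarith
    · refine ⟨v0, v2, v1, v2, hE02, hE12, ?_⟩
      have : (2:ℝ) ^ ((1/50 : ℝ) * n) * wH v1 v2 ≤ 2 * wH v1 v2 :=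
        mul_le_mul_of_nonneg_right hrp hp12.le
      linarith
  · -- chain construction
    push_neg at hsmall
    set k := n / 5 with hkdef
    have hk5 : 5 * k ≤ n := by omega
    have hk2 : 2 ≤ k := by omega
    have hkn : n < 5 * k + 5 := by omega
    refine ⟨fun u v => Chain.Eh k u.1 v.1, fun u v => Chain.wh k u.1 v.1,
      fun u v h => Chain.Eh_symm k u.1 v.1 h, fun u v => Chain.wh_symm k u.1 v.1,
      fun u v _ => Chain.wh_pos k u.1 v.1, ?_⟩
    intro wH hHsym hHpos happ
    obtain ⟨x, y, z, l, hxy, hzl, hineq⟩ :=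
      Chain.chain_main hk5 hk2 hε0 hε12 wH hHpos happ
    refine ⟨x, y, z, l, hxy, hzl, ?_⟩
    have hzl0 : 0 < wH z l := hHpos _ _ hzl
    have hcast : ((1:ℝ)/50) * n ≤ ((k - 1 : ℕ) : ℝ) := by
      have hnat : n ≤ 50 * (k - 1) := by omega
      have : (n:ℝ) ≤ 50 * ((k-1 : ℕ):ℝ) := by exact_mod_cast hnat
      linarith
    have hrp : (2:ℝ) ^ ((1/50 : ℝ) * n) ≤ (2:ℝ) ^ (k-1 : ℕ) := by
      calc (2:ℝ) ^ ((1/50 : ℝ) * n) ≤ (2:ℝ) ^ (((k-1 : ℕ)):ℝ) :=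
            Real.rpow_le_rpow_of_exponent_le (by norm_num) hcast
        _ = (2:ℝ) ^ (k-1 : ℕ) := Real.rpow_natCast 2 (k-1)
    have := mul_le_mul_of_nonneg_right hrp hzl0.le
    linarith
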